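/- If u is a unit-distance representation of a connected graph G in ℝ^d attaining 𝓔_p(G;A) < ∞ (A ⪰ 0, p ∈ [1,∞]), then there exists an optimal unit-distance representation v of G in ℝ^d with the same objective value such that the origin lies in the convex hull of {v(i) : i ∈ V}. -/

import Mathlib

set_option maxHeartbeats 1000000


open scoped RealInnerProductSpace

def IsUnitDistRep {V : Type*} (G : SimpleGraph V) {d : ℕ}
    (u : V → EuclideanSpace ℝ (Fin d)) : Prop :=
  ∀ i j, G.Adj i j → ‖u i - u j‖ = 1

def IsHypersphereRep {V : Type*} (G : SimpleGraph V) {d : ℕ}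
    (u : V → EuclideanSpace ℝ (Fin d)) (t : ℝ) : Prop :=
  IsUnitDistRep G u ∧ ∀ i, ‖u i‖ ^ 2 = t

noncomputable def hypersphereNumber {V : Type*} (G : SimpleGraph V) : ℝ :=
  sInf {t | ∃ (d : ℕ) (u : V → EuclideanSpace ℝ (Fin d)), IsHypersphereRep G u t}

open Matrix

open scoped ENNReal

/-- The objective `‖(uᵢᵀ A uᵢ)_{i∈V}‖_p`. -/
noncomputable def objP {V : Type*} [Fintype V] (p : ℝ≥0∞) [Fact (1 ≤ p)] {d : ℕ}
    (A : Matrix (Fin d) (Fin d) ℝ) (u : V → EuclideanSpace ℝ (Fin d)) : ℝ :=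
  ‖(WithLp.equiv p (∀ _ : V, ℝ)).symm
    (fun i => dotProduct (WithLp.equiv 2 (Fin d → ℝ) (u i))
      (A *ᵥ WithLp.equiv 2 (Fin d → ℝ) (u i)))‖

lemma piLp_norm_mono {V : Type*} [Fintype V] (p : ℝ≥0∞) [Fact (1 ≤ p)]
    (y z : PiLp p (fun _ : V => ℝ)) (h : ∀ i, |y i| ≤ |z i|) : ‖y‖ ≤ ‖z‖ := by
  by_cases hp : p = ∞
  · subst hp
    rw [PiLp.norm_eq_ciSup, PiLp.norm_eq_ciSup]
    rcases isEmpty_or_nonempty V with hV | hV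
    · simp
    refine ciSup_mono (Set.Finite.bddAbove (Set.finite_range _)) fun i => ?_
    simpa [Real.norm_eq_abs] using h i
  · have hp0 : 0 < p.toReal := ENNReal.toReal_pos (by
      have := (Fact.out : 1 ≤ p); intro h0; simp [h0] at this) hp
    rw [PiLp.norm_eq_sum hp0, PiLp.norm_eq_sum hp0]
    refine Real.rpow_le_rpow (Finset.sum_nonneg fun i _ => Real.rpow_nonneg (norm_nonneg _) _)
      (Finset.sum_le_sum fun i _ => ?_) (by positivity)
    simpa [Real.norm_eq_abs] using
      Real.rpow_le_rpow (abs_nonneg _) (by simpa [Real.norm_eq_abs] using h i) hp0.le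

lemma inner_toEuclideanLin {d : ℕ} (A : Matrix (Fin d) (Fin d) ℝ)
    (a b : EuclideanSpace ℝ (Fin d)) :
    ⟪a, Matrix.toEuclideanLin A b⟫ =
      dotProduct (WithLp.equiv 2 (Fin d → ℝ) a) (A *ᵥ WithLp.equiv 2 (Fin d → ℝ) b) := by
  simp [Matrix.toEuclideanLin_apply, PiLp.inner_apply, dotProduct, RCLike.inner_apply,
    mul_comm]

/-- If `u` attains `𝓔_p(G;A)` for a connected graph `G`, then there is an optimal
unit-distance representation `v` with the same objective value whose convex hull
contains the origin. -/
theorem ellipsoid_optimal_zero_mem_convexHull {V : Type*} [Fintype V]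
    (G : SimpleGraph V) (hG : G.Connected) {d : ℕ}
    (A : Matrix (Fin d) (Fin d) ℝ) (hA : A.PosSemidef)
    (p : ℝ≥0∞) [Fact (1 ≤ p)]
    (u : V → EuclideanSpace ℝ (Fin d)) (hu : IsUnitDistRep G u)
    (hopt : objP p A u = sInf {r : ℝ | ∃ u' : V → EuclideanSpace ℝ (Fin d),
      IsUnitDistRep G u' ∧ r = objP p A u'}) :
    ∃ v : V → EuclideanSpace ℝ (Fin d), IsUnitDistRep G v ∧
      objP p A v = objP p A u ∧
      (0 : EuclideanSpace ℝ (Fin d)) ∈ convexHull ℝ (Set.range v) := by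
  classical
  haveI : Nonempty V := hG.nonempty
  set T : EuclideanSpace ℝ (Fin d) →ₗ[ℝ] EuclideanSpace ℝ (Fin d) :=
    Matrix.toEuclideanLin A with hT
  have hTsym : ∀ a b : EuclideanSpace ℝ (Fin d), ⟪T a, b⟫ = ⟪a, T b⟫ :=
    (Matrix.isHermitian_iff_isSymmetric.mp hA.isHermitian)
  have hobj : ∀ w : V → EuclideanSpace ℝ (Fin d), objP p A w =
      ‖(WithLp.equiv p (∀ _ : V, ℝ)).symm (fun i => ⟪w i, T (w i)⟫)‖ := by
    intro w; unfold objP; congr 1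
    congr 1; funext i; rw [hT, inner_toEuclideanLin]
  have hQ0 : ∀ w : EuclideanSpace ℝ (Fin d), 0 ≤ ⟪w, T w⟫ := by
    intro w
    rw [hT, inner_toEuclideanLin]
    simpa using hA.dotProduct_mulVec_nonneg (WithLp.equiv 2 (Fin d → ℝ) w)
  have hker : ∀ w : EuclideanSpace ℝ (Fin d), ⟪w, T w⟫ = 0 → T w = 0 := by
    intro w hw
    rw [hT, inner_toEuclideanLin] at hw
    have := (hA.dotProduct_mulVec_zero_iff (WithLp.equiv 2 (Fin d → ℝ) w)).mp (by simpa using hw)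
    rw [hT]
    apply (WithLp.equiv 2 (Fin d → ℝ)).injective
    simpa [Matrix.toEuclideanLin_apply] using this
  set K : Set (EuclideanSpace ℝ (Fin d)) := convexHull ℝ (Set.range u) with hK
  set N : Submodule ℝ (EuclideanSpace ℝ (Fin d)) := LinearMap.ker T with hN
  by_cases hmem : (K ∩ (N : Set (EuclideanSpace ℝ (Fin d)))).Nonempty
  · -- translate by a kernel point in the hull
    obtain ⟨w, hwK, hwker⟩ := hmem
    have hTw : T w = 0 := hwker
    refine ⟨fun i => u i - w, ?_, ?_, ?_⟩
    · intro i j hij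
      have := hu i j hij
      simpa [sub_sub_sub_cancel_right] using this
    · rw [hobj, hobj]
      congr 2
      funext i
      have h1 : ⟪u i - w, T (u i - w)⟫ = ⟪u i, T (u i)⟫ - ⟪w, T (u i)⟫
          - (⟪u i, T w⟫ - ⟪w, T w⟫) := by
        rw [map_sub]
        simp [inner_sub_left, inner_sub_right]
      rw [h1, hTw]
      have h2 : ⟪w, T (u i)⟫ = (0:ℝ) := by
        rw [← hTsym, hTw, inner_zero_left]
      simp [h2]
    · have himg : (fun x : EuclideanSpace ℝ (Fin d) => x - w) '' K =
          convexHull ℝ ((fun x : EuclideanSpace ℝ (Fin d) => x - w) '' Set.range u) := by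
        have := (AffineEquiv.constVAdd ℝ (EuclideanSpace ℝ (Fin d))
          (-w)).toAffineMap.image_convexHull (Set.range u)
        simpa [sub_eq_neg_add] using this
      have h0 : (0 : EuclideanSpace ℝ (Fin d)) ∈
          (fun x : EuclideanSpace ℝ (Fin d) => x - w) '' K := ⟨w, hwK, sub_self w⟩
      rw [himg] at h0
      convert h0 using 2
      ext x
      simp [eq_comm, sub_eq_iff_eq_add, eq_sub_iff_add_eq]
  · -- separation + perturbation contradicts optimality
    exfalso
    have hKu : ∀ i, u i ∈ K := fun i => subset_convexHull ℝ _ (Set.mem_range_self i)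
    have hdisj : Disjoint K (N : Set (EuclideanSpace ℝ (Fin d))) := by
      rw [Set.disjoint_iff_inter_eq_empty]
      exact Set.not_nonempty_iff_eq_empty.mp hmem
    obtain ⟨f, c, c', hfK, hcc', hfN⟩ :=
      geometric_hahn_banach_compact_closed (convex_convexHull ℝ _)
        ((Set.finite_range u).isCompact_convexHull ℝ) N.convex
        (Submodule.closed_of_finiteDimensional N) hdisj
    have hc'0 : c' < 0 := by simpa using hfN 0 (Submodule.zero_mem N)
    have hfN0 : ∀ n ∈ N, f n = 0 := by
      intro n hn
      by_contra hfn
      have h1 := hfN (((c' - 1) / f n) • n) (N.smul_mem _ hn)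
      rw [ContinuousLinearMap.map_smul, smul_eq_mul, div_mul_cancel₀ _ hfn] at h1
      linarith
    set h : EuclideanSpace ℝ (Fin d) := (InnerProductSpace.toDual ℝ _).symm f with hh
    have hhinner : ∀ x : EuclideanSpace ℝ (Fin d), ⟪h, x⟫ = f x := fun x =>
      InnerProductSpace.toDual_symm_apply
    -- h lies in the range of T
    have hrange : h ∈ LinearMap.range T := by
      rw [← Submodule.orthogonal_orthogonal (LinearMap.range T)]
      intro y hy
      have hyN : T y = 0 := by
        apply hker
        have h4 := hy (T (T y)) ⟨T y, rfl⟩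
        have h2 : ⟪T y, T y⟫ = ⟪T (T y), y⟫ := by
          rw [hTsym (T y) y]
        have h3 : ⟪T y, T y⟫ = 0 := by rw [h2, h4]
        have h5 := inner_self_eq_zero.mp h3
        rw [h5, inner_zero_right]
      have h6 := hfN0 y hyN
      rw [← hhinner y] at h6
      exact (real_inner_comm y h) ▸ h6
    obtain ⟨x, hx⟩ := hrange
    -- constants
    set e : ℝ := ⟪x, h⟫ with he
    have he0 : 0 ≤ e := by rw [he, ← hx]; exact hQ0 x
    have hfui : ∀ i, f (u i) < c := fun i => hfK (u i) (hKu i)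
    have hc0 : c < 0 := lt_trans hcc' hc'0
    set m : ℝ := Finset.univ.inf' Finset.univ_nonempty (fun i => -f (u i)) with hm
    have hm_pos : 0 < m := by
      rw [hm]
      apply lt_of_lt_of_le (neg_pos.mpr hc0)
      apply Finset.le_inf'
      intro i _
      linarith [hfui i]
    have hm_le : ∀ i, m ≤ -f (u i) := fun i =>
      Finset.inf'_le _ (Finset.mem_univ i)
    set ε : ℝ := m / (e + 1) with hε
    have hε_pos : 0 < ε := div_pos hm_pos (by linarith)
    have hεe : ε * e ≤ m := by
      rw [hε, div_mul_eq_mul_div, div_le_iff₀ (by linarith : (0:ℝ) < e + 1)]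
      nlinarith
    set u' : V → EuclideanSpace ℝ (Fin d) := fun i => u i + ε • x with hu'
    have hu'rep : IsUnitDistRep G u' := by
      intro i j hij
      have := hu i j hij
      simpa [hu', add_sub_add_right_eq_sub] using this
    -- quadratic form values
    set q : V → ℝ := fun i => ⟪u i, T (u i)⟫ with hq
    set q' : V → ℝ := fun i => ⟪u' i, T (u' i)⟫ with hq'
    have hq_pos : ∀ i, 0 < q i := by
      intro i
      rcases lt_or_eq_of_le (hQ0 (u i)) with h1 | h1
      · exact h1
      · exfalso
        have : T (u i) = 0 := hker _ h1.symm
        exact hmem ⟨u i, hKu i, this⟩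
    have hq'_nonneg : ∀ i, 0 ≤ q' i := fun i => hQ0 (u' i)
    have hq'_lt : ∀ i, q' i < q i := by
      intro i
      have e1 : ⟪x, T (u i)⟫ = f (u i) := by
        rw [← hTsym x (u i), hx, hhinner]
      have e2 : ⟪u i, T x⟫ = f (u i) := by
        rw [hx, real_inner_comm, hhinner]
      have e3 : ⟪x, T x⟫ = e := by rw [hx, he]
      have expand : q' i = q i + ε * (2 * f (u i) + ε * e) := by
        have hqq : q' i = ⟪u i, T (u i)⟫ + ε * ⟪u i, T x⟫ +
            (ε * ⟪x, T (u i)⟫ + ε * (ε * ⟪x, T x⟫)) := by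
          show ⟪u i + ε • x, T (u i + ε • x)⟫ = _
          rw [map_add, LinearMap.map_smul]
          simp only [inner_add_left, inner_add_right, real_inner_smul_left,
            real_inner_smul_right]
          ring
        rw [hqq, e1, e2, e3]
        show _ = ⟪u i, T (u i)⟫ + ε * (2 * f (u i) + ε * e)
        ring
      rw [expand]
      have h1 : 2 * f (u i) + ε * e ≤ f (u i) := by
        have := hm_le i
        linarith [hεe]
      nlinarith [hfui i, hc0, hε_pos, mul_le_mul_of_nonneg_left h1 hε_pos.le]
    -- compare norms via scaling
    set t : ℝ := Finset.univ.sup' Finset.univ_nonempty (fun i => q' i / q i) with ht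
    have ht1 : t < 1 := by
      rw [ht]
      apply (Finset.sup'_lt_iff Finset.univ_nonempty).mpr
      intro i _
      exact (div_lt_one (hq_pos i)).mpr (hq'_lt i)
    set t' : ℝ := max t 0 with ht'
    have ht'0 : 0 ≤ t' := le_max_right _ _
    have ht'1 : t' < 1 := max_lt ht1 one_pos
    have hbound : ∀ i, q' i ≤ t' * q i := by
      intro i
      have h0 : q' i / q i ≤ t := by
        rw [ht]
        exact Finset.le_sup' (fun j => q' j / q j) (Finset.mem_univ i)
      have h1 : q' i / q i ≤ t' := le_trans h0 (le_max_left _ _)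
      calc q' i = (q' i / q i) * q i := (div_mul_cancel₀ _ (hq_pos i).ne').symm
      _ ≤ t' * q i := mul_le_mul_of_nonneg_right h1 (hq_pos i).le
    have hou : objP p A u = ‖(WithLp.equiv p (∀ _ : V, ℝ)).symm q‖ := hobj u
    have hou' : objP p A u' = ‖(WithLp.equiv p (∀ _ : V, ℝ)).symm q'‖ := hobj u'
    have hQnorm_pos : 0 < objP p A u := by
      rw [hou]
      refine norm_pos_iff.mpr fun hzero => ?_
      have h0 : q (Classical.arbitrary V) = 0 :=
        congrArg (fun z : PiLp p (fun _ : V => ℝ) => z (Classical.arbitrary V)) hzero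
      exact absurd h0 (ne_of_gt (hq_pos _))
    have hmono : objP p A u' ≤ t' * objP p A u := by
      rw [hou, hou']
      have hsm : (WithLp.equiv p (∀ _ : V, ℝ)).symm (t' • q) =
          t' • (WithLp.equiv p (∀ _ : V, ℝ)).symm q := rfl
      have := piLp_norm_mono p ((WithLp.equiv p (∀ _ : V, ℝ)).symm q')
        ((WithLp.equiv p (∀ _ : V, ℝ)).symm (t' • q)) ?_
      · rw [hsm, norm_smul, Real.norm_eq_abs, abs_of_nonneg ht'0] at this
        exact this
      · intro i
        have h1 : |q' i| = q' i := abs_of_nonneg (hq'_nonneg i)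
        have h2 : (0:ℝ) ≤ t' * q i := mul_nonneg ht'0 (hq_pos i).le
        show |q' i| ≤ |t' * q i|
        rw [h1, abs_of_nonneg h2]
        exact hbound i
    have hlt : objP p A u' < objP p A u := by
      apply lt_of_le_of_lt hmono
      nlinarith
    -- contradiction with optimality
    have hmemS : objP p A u' ∈ {r : ℝ | ∃ w : V → EuclideanSpace ℝ (Fin d),
        IsUnitDistRep G w ∧ r = objP p A w} := ⟨u', hu'rep, rfl⟩
    have hbdd : BddBelow {r : ℝ | ∃ w : V → EuclideanSpace ℝ (Fin d),
        IsUnitDistRep G w ∧ r = objP p A w} := by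
      refine ⟨0, fun r hr => ?_⟩
      obtain ⟨w, _, hw⟩ := hr
      rw [hw]
      exact norm_nonneg _
    have hle := csInf_le hbdd hmemS
    rw [← hopt] at hle
    linarith
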